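/- Let α ≥ β ≥ γ ≥ 1 be real numbers and let η = 1/α + 1/β + 1/γ. Then the number of triples (x₁,x₂,x₃) ∈ ℕ³ with x₁/α + x₂/β + x₃/γ ≤ 1 is at most (αβγ/6)·(1+η)³. -/

import Mathlib

open Finset

private lemma sum_ind_le (m c : ℝ) (hm : 0 < m) (K : ℕ) :
    (∑ k ∈ range K, if (k : ℝ) / m ≤ c then (1:ℝ) else 0)
      ≤ m * max (c + 1/m) 0 := by
  classical
  rw [Finset.sum_boole]
  rcases le_or_gt 0 c with hc | hc
  · have hsub : (range K).filter (fun k : ℕ => (k : ℝ) / m ≤ c)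
        ⊆ range (⌊m * c⌋₊ + 1) := by
      intro k hk
      simp only [mem_filter, mem_range] at hk ⊢
      have : (k : ℝ) ≤ m * c := by
        rw [div_le_iff₀ hm] at hk
        linarith [hk.2]
      exact Nat.lt_succ_of_le (Nat.le_floor this)
    have h1 : (((range K).filter (fun k : ℕ => (k : ℝ) / m ≤ c)).card : ℝ)
        ≤ (⌊m * c⌋₊ : ℝ) + 1 := by
      have := Finset.card_le_card hsub
      rw [Finset.card_range] at this
      exact_mod_cast this
    have h2 : (⌊m * c⌋₊ : ℝ) ≤ m * c := Nat.floor_le (by positivity)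
    have h3 : max (c + 1/m) 0 = c + 1/m := max_eq_left (by positivity)
    rw [h3]
    have h4 : m * (c + 1/m) = m * c + 1 := by field_simp
    rw [h4]
    linarith
  · have he : (range K).filter (fun k : ℕ => (k : ℝ) / m ≤ c) = ∅ := by
      apply Finset.filter_false_of_mem
      intro k _
      have : (0:ℝ) ≤ (k : ℝ) / m := by positivity
      push_neg
      linarith
    rw [he]
    simp only [card_empty, Nat.cast_zero]
    positivity

private lemma telescope_le (K : ℕ) (f g : ℕ → ℝ)
    (h : ∀ k, f k ≤ g k - g (k + 1)) (hg : 0 ≤ g K) :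
    ∑ k ∈ range K, f k ≤ g 0 := by
  have h1 : ∑ k ∈ range K, f k ≤ ∑ k ∈ range K, (g k - g (k+1)) :=
    Finset.sum_le_sum fun k _ => h k
  have h2 : ∑ k ∈ range K, (g k - g (k+1)) = g 0 - g K := by
    rw [← Finset.sum_range_sub' g K]
  linarith

private lemma sum_pos_part_le (m c : ℝ) (hm : 0 < m) (K : ℕ) :
    (∑ k ∈ range K, max (c - (k : ℝ) / m) 0)
      ≤ m / 2 * max (c + 1/m) 0 ^ 2 := by
  set q := c + 1/m with hq
  have ht := telescope_le K (fun k => max (c - (k : ℝ) / m) 0)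
      (fun k => m / 2 * max (q - (k:ℝ)/m) 0 ^ 2) ?_ (by positivity)
  · refine le_trans ht (le_of_eq ?_)
    norm_num
  · intro k
    have hab : c - (k:ℝ)/m = q - ((k:ℝ)+1)/m := by
      rw [hq]; field_simp; ring
    rw [hab]
    have hcast : ((k+1 : ℕ) : ℝ) = (k:ℝ) + 1 := by push_cast; ring
    rw [hcast]
    set a := q - (k:ℝ)/m with ha
    set b := q - ((k:ℝ)+1)/m with hb
    have h1m : a = b + 1/m := by rw [ha, hb]; field_simp; ring
    clear_value a b
    rcases le_or_gt 0 b with h0 | h0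
    · have hab2 : b ≤ a := by
        have : (0:ℝ) < 1/m := by positivity
        linarith
      rw [max_eq_left h0, max_eq_left (le_trans h0 hab2)]
      have hk : m / 2 * a ^ 2 - m / 2 * b ^ 2 = b + 1/(2*m) := by
        rw [h1m]; field_simp; ring
      have : (0:ℝ) < 1/(2*m) := by positivity
      linarith
    · rw [max_eq_right (le_of_lt h0)]
      have : (0:ℝ) ≤ m / 2 * max a 0 ^ 2 := by positivity
      linarith

private lemma sum_pos_part_sq_le (m c : ℝ) (hm : 0 < m) (K : ℕ) :
    (∑ k ∈ range K, max (c - (k : ℝ) / m) 0 ^ 2)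
      ≤ m / 3 * max (c + 1/m) 0 ^ 3 := by
  set q := c + 1/m with hq
  have ht := telescope_le K (fun k => max (c - (k : ℝ) / m) 0 ^ 2)
      (fun k => m / 3 * max (q - (k:ℝ)/m) 0 ^ 3) ?_ (by positivity)
  · refine le_trans ht (le_of_eq ?_)
    norm_num
  · intro k
    have hab : c - (k:ℝ)/m = q - ((k:ℝ)+1)/m := by
      rw [hq]; field_simp; ring
    rw [hab]
    have hcast : ((k+1 : ℕ) : ℝ) = (k:ℝ) + 1 := by push_cast; ring
    rw [hcast]
    set a := q - (k:ℝ)/m with ha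
    set b := q - ((k:ℝ)+1)/m with hb
    have h1m : a = b + 1/m := by rw [ha, hb]; field_simp; ring
    clear_value a b
    rcases le_or_gt 0 b with h0 | h0
    · have hab2 : b ≤ a := by
        have : (0:ℝ) < 1/m := by positivity
        linarith
      rw [max_eq_left h0, max_eq_left (le_trans h0 hab2)]
      have hk : m / 3 * a ^ 3 - m / 3 * b ^ 3 = b^2 + b/m + 1/(3*m^2) := by
        rw [h1m]; field_simp; ring
      have h1 : (0:ℝ) ≤ b/m := by positivity
      have h2 : (0:ℝ) ≤ 1/(3*m^2) := by positivity
      linarith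
    · rw [max_eq_right (le_of_lt h0)]
      have h1 : (0:ℝ) ≤ max b 0 ^ 3 := by positivity
      have h2 : (0:ℝ) ≤ m / 3 * max a 0 ^ 3 := by positivity
      simp only [max_eq_right (le_of_lt h0)] at *
      nlinarith

theorem lattice_point_bound_weak
    (α β γ : ℝ) (hγ : 1 ≤ γ) (hβγ : γ ≤ β) (hαβ : β ≤ α) :
    ({t : ℕ × ℕ × ℕ | (t.1 : ℝ) / α + (t.2.1 : ℝ) / β + (t.2.2 : ℝ) / γ ≤ 1}.ncard : ℝ)
      ≤ α * β * γ / 6 * (1 + (1 / α + 1 / β + 1 / γ)) ^ 3 := by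
  classical
  have hβ : (1:ℝ) ≤ β := le_trans hγ hβγ
  have hα : (1:ℝ) ≤ α := le_trans hβ hαβ
  have hα0 : (0:ℝ) < α := by linarith
  have hβ0 : (0:ℝ) < β := by linarith
  have hγ0 : (0:ℝ) < γ := by linarith
  set A := ⌊α⌋₊ with hA
  set B := ⌊β⌋₊ with hB
  set C := ⌊γ⌋₊ with hC
  set P : ℕ × ℕ × ℕ → Prop :=
    fun t => (t.1 : ℝ) / α + (t.2.1 : ℝ) / β + (t.2.2 : ℝ) / γ ≤ 1 with hP
  set F : Finset (ℕ × ℕ × ℕ) :=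
    ((range (A+1)) ×ˢ (range (B+1)) ×ˢ (range (C+1))).filter P with hF
  have hSF : {t : ℕ × ℕ × ℕ | (t.1 : ℝ) / α + (t.2.1 : ℝ) / β + (t.2.2 : ℝ) / γ ≤ 1}
      = ↑F := by
    ext ⟨x, y, z⟩
    simp only [Set.mem_setOf_eq, hF, Finset.coe_filter, Finset.mem_product,
      Finset.mem_range, Set.mem_setOf_eq, hP]
    constructor
    · intro h
      have hx0 : (0:ℝ) ≤ (x:ℝ)/α := by positivity
      have hy0 : (0:ℝ) ≤ (y:ℝ)/β := by positivity
      have hz0 : (0:ℝ) ≤ (z:ℝ)/γ := by positivity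
      have hx : (x:ℝ) ≤ α := by
        have hh : (x:ℝ)/α ≤ 1 := by linarith
        rw [div_le_iff₀ hα0] at hh; linarith
      have hy : (y:ℝ) ≤ β := by
        have hh : (y:ℝ)/β ≤ 1 := by linarith
        rw [div_le_iff₀ hβ0] at hh; linarith
      have hz : (z:ℝ) ≤ γ := by
        have hh : (z:ℝ)/γ ≤ 1 := by linarith
        rw [div_le_iff₀ hγ0] at hh; linarith
      exact ⟨⟨Nat.lt_succ_of_le (Nat.le_floor hx),
        Nat.lt_succ_of_le (Nat.le_floor hy),
        Nat.lt_succ_of_le (Nat.le_floor hz)⟩, h⟩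
    · exact fun h => h.2
  rw [hSF, Set.ncard_coe_finset]
  have hcard : (F.card : ℝ)
      = ∑ x ∈ range (A+1), ∑ y ∈ range (B+1), ∑ z ∈ range (C+1),
          (if (x : ℝ) / α + (y : ℝ) / β + (z : ℝ) / γ ≤ 1 then (1:ℝ) else 0) := by
    rw [hF, Finset.card_filter]
    push_cast
    rw [Finset.sum_product]
    congr 1
    ext x
    rw [Finset.sum_product]
  rw [hcard]
  have η0 : (0:ℝ) < 1 + (1/α + 1/β + 1/γ) := by positivity
  have hiff : ∀ x y z : ℕ, ((x : ℝ) / α + (y : ℝ) / β + (z : ℝ) / γ ≤ 1)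
      = ((z : ℝ) / γ ≤ (1 - (x:ℝ)/α - (y:ℝ)/β)) := by
    intro x y z
    apply propext
    constructor <;> intro h <;> linarith
  calc
    ∑ x ∈ range (A+1), ∑ y ∈ range (B+1), ∑ z ∈ range (C+1),
        (if (x : ℝ) / α + (y : ℝ) / β + (z : ℝ) / γ ≤ 1 then (1:ℝ) else 0)
      ≤ ∑ x ∈ range (A+1), ∑ y ∈ range (B+1),
          γ * max (((1 + 1/γ - (x:ℝ)/α) - (y:ℝ)/β)) 0 := by
        apply Finset.sum_le_sum; intro x _
        apply Finset.sum_le_sum; intro y _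
        simp only [hiff]
        have := sum_ind_le γ (1 - (x:ℝ)/α - (y:ℝ)/β) hγ0 (C+1)
        have heq : (1 - (x:ℝ)/α - (y:ℝ)/β) + 1/γ = (1 + 1/γ - (x:ℝ)/α) - (y:ℝ)/β := by
          ring
        rw [heq] at this
        exact this
    _ ≤ ∑ x ∈ range (A+1), γ * (β/2 * max (((1 + 1/γ + 1/β) - (x:ℝ)/α)) 0 ^ 2) := by
        apply Finset.sum_le_sum; intro x _
        rw [← Finset.mul_sum]
        apply mul_le_mul_of_nonneg_left _ (le_of_lt hγ0)
        have := sum_pos_part_le β (1 + 1/γ - (x:ℝ)/α) hβ0 (B+1)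
        have heq : (1 + 1/γ - (x:ℝ)/α) + 1/β = (1 + 1/γ + 1/β) - (x:ℝ)/α := by ring
        rw [heq] at this
        exact this
    _ ≤ γ * (β/2 * (α/3 * max ((1 + 1/γ + 1/β) + 1/α) 0 ^ 3)) := by
        rw [← Finset.mul_sum]
        apply mul_le_mul_of_nonneg_left _ (le_of_lt hγ0)
        rw [← Finset.mul_sum]
        apply mul_le_mul_of_nonneg_left _ (by positivity : (0:ℝ) ≤ β/2)
        exact sum_pos_part_sq_le α (1 + 1/γ + 1/β) hα0 (A+1)
    _ = α * β * γ / 6 * (1 + (1/α + 1/β + 1/γ)) ^ 3 := by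
        rw [max_eq_left (by positivity)]
        ring
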